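/- For all θ ≤ 0 and n ≥ 1, the Stern–Brocot sums satisfy (f_{n+1} f_{n+2})^{-θ} ≤ ∑_{k=1}^{2^n} |T_{n,k}|^θ ≤ 2^n (f_{n+1} f_{n+2})^{-θ} ≤ 2^n γ^{-2θ(n+2)}; consequently −2θ log γ ≤ P(θ) ≤ log 2 − 2θ log γ for θ ≤ 0, where P is the Stern–Brocot pressure defined with limsup. -/

import Mathlib

open Filter

/-- Stern–Brocot numerators. -/
def sbS : ℕ → ℕ → ℕ
  | 0, k => if k ≤ 1 then 0 else 1
  | n + 1, k =>
    if k % 2 = 1 then sbS n ((k + 1) / 2) else sbS n (k / 2) + sbS n (k / 2 + 1)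

/-- Stern–Brocot denominators. -/
def sbT : ℕ → ℕ → ℕ
  | 0, _ => 1
  | n + 1, k =>
    if k % 2 = 1 then sbT n ((k + 1) / 2) else sbT n (k / 2) + sbT n (k / 2 + 1)

/-- The length of the Stern–Brocot interval `T_{n,k}`. -/
noncomputable def sbLen (n k : ℕ) : ℝ :=
  (sbS n (k + 1) : ℝ) / sbT n (k + 1) - (sbS n k : ℝ) / sbT n k

/-- The Stern–Brocot pressure (with `limsup`). -/
noncomputable def sbPressure (θ : ℝ) : ℝ :=
  limsup (fun n : ℕ =>
    Real.log (∑ k ∈ Finset.Icc 1 (2 ^ n), sbLen n k ^ θ) / n) atTop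

open Real Topology

lemma sbS_odd (n m : ℕ) : sbS (n+1) (2*m+1) = sbS n (m+1) := by
  rw [sbS, if_pos (by omega)]; congr 1; omega

lemma sbS_even (n m : ℕ) : sbS (n+1) (2*m) = sbS n m + sbS n (m+1) := by
  rw [sbS, if_neg (by omega)]; congr 2 <;> omega

lemma sbT_odd (n m : ℕ) : sbT (n+1) (2*m+1) = sbT n (m+1) := by
  rw [sbT, if_pos (by omega)]; congr 1; omega

lemma sbT_even (n m : ℕ) : sbT (n+1) (2*m) = sbT n m + sbT n (m+1) := by
  rw [sbT, if_neg (by omega)]; congr 2 <;> omega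

lemma sbT_pos (n k : ℕ) : 0 < sbT n k := by
  induction n generalizing k with
  | zero => simp [sbT]
  | succ n ih =>
    rw [sbT]
    split
    · exact ih _
    · exact Nat.add_pos_left (ih _) _

lemma sb_det (n : ℕ) : ∀ k, 1 ≤ k → k ≤ 2 ^ n →
    (sbS n (k+1) : ℤ) * sbT n k - (sbS n k : ℤ) * sbT n (k+1) = 1 := by
  induction n with
  | zero =>
    intro k h1 h2
    interval_cases k
    simp [sbS, sbT]
  | succ n ih =>
    intro k h1 h2
    have hpow : (2:ℕ) ^ (n+1) = 2 * 2 ^ n := by ring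
    rcases Nat.even_or_odd k with ⟨m, rfl⟩ | ⟨m, rfl⟩
    · have hmm : m + m = 2 * m := by ring
      rw [hmm] at h1 h2 ⊢
      have H := ih m (by omega) (by omega)
      rw [sbS_even, sbT_even, sbS_odd, sbT_odd]
      push_cast
      push_cast at H
      linear_combination H
    · have H := ih (m+1) (by omega) (by omega)
      have h2m : 2*m+1+1 = 2*(m+1) := by ring
      rw [h2m, sbS_odd, sbT_odd, sbS_even, sbT_even]
      push_cast
      push_cast at H
      linear_combination H

lemma sbT_bound (n : ℕ) : ∀ k, 1 ≤ k → k ≤ 2 ^ n →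
    sbT n k ≤ Nat.fib (n+2) ∧ sbT n (k+1) ≤ Nat.fib (n+2) ∧
    (sbT n k ≤ Nat.fib (n+1) ∨ sbT n (k+1) ≤ Nat.fib (n+1)) := by
  induction n with
  | zero =>
    intro k h1 h2
    interval_cases k
    refine ⟨by decide, by decide, Or.inl (by decide)⟩
  | succ n ih =>
    intro k h1 h2
    have hpow : (2:ℕ) ^ (n+1) = 2 * 2 ^ n := by ring
    have e1 : Nat.fib (n+1+2) = Nat.fib (n+3) := rfl
    have e2 : Nat.fib (n+1+1) = Nat.fib (n+2) := rfl
    have hf3 : Nat.fib (n+3) = Nat.fib (n+1) + Nat.fib (n+2) := by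
      rw [Nat.fib_add_two]
    have hf12 : Nat.fib (n+1) ≤ Nat.fib (n+2) := Nat.fib_le_fib_succ
    rcases Nat.even_or_odd k with ⟨m, rfl⟩ | ⟨m, rfl⟩
    · have hmm : m + m = 2 * m := by ring
      rw [hmm] at h1 h2 ⊢
      obtain ⟨a1, a2, a3⟩ := ih m (by omega) (by omega)
      rw [sbT_even, sbT_odd]
      refine ⟨?_, ?_, ?_⟩ <;> omega
    · obtain ⟨a1, a2, a3⟩ := ih (m+1) (by omega) (by omega)
      rw [show 2*m+1+1 = 2*(m+1) by ring, sbT_odd, sbT_even]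
      refine ⟨?_, ?_, ?_⟩ <;> omega

lemma sbT_mul_le (n k : ℕ) (h1 : 1 ≤ k) (h2 : k ≤ 2 ^ n) :
    sbT n k * sbT n (k+1) ≤ Nat.fib (n+1) * Nat.fib (n+2) := by
  obtain ⟨a1, a2, a3⟩ := sbT_bound n k h1 h2
  rcases a3 with h | h
  · exact Nat.mul_le_mul h a2
  · calc sbT n k * sbT n (k+1) ≤ Nat.fib (n+2) * Nat.fib (n+1) := Nat.mul_le_mul a1 h
      _ = Nat.fib (n+1) * Nat.fib (n+2) := Nat.mul_comm _ _

lemma sbT_extreme (n : ℕ) : ∃ k, 1 ≤ k ∧ k ≤ 2 ^ n ∧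
    sbT n k * sbT n (k+1) = Nat.fib (n+1) * Nat.fib (n+2) := by
  suffices h : ∃ k, 1 ≤ k ∧ k ≤ 2 ^ n ∧
      ((sbT n k = Nat.fib (n+1) ∧ sbT n (k+1) = Nat.fib (n+2)) ∨
       (sbT n k = Nat.fib (n+2) ∧ sbT n (k+1) = Nat.fib (n+1))) by
    obtain ⟨k, hk1, hk2, hc | hc⟩ := h
    · exact ⟨k, hk1, hk2, by rw [hc.1, hc.2]⟩
    · exact ⟨k, hk1, hk2, by rw [hc.1, hc.2, Nat.mul_comm]⟩
  induction n with
  | zero => exact ⟨1, by decide, by decide, Or.inl ⟨by decide, by decide⟩⟩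
  | succ n ih =>
    have hpow : (2:ℕ) ^ (n+1) = 2 * 2 ^ n := by ring
    have e1 : Nat.fib (n+1+2) = Nat.fib (n+3) := rfl
    have e2 : Nat.fib (n+1+1) = Nat.fib (n+2) := rfl
    have hf3 : Nat.fib (n+3) = Nat.fib (n+1) + Nat.fib (n+2) := by
      rw [Nat.fib_add_two]
    obtain ⟨k, hk1, hk2, hc | hc⟩ := ih
    · refine ⟨2*k, by omega, by omega, Or.inr ⟨?_, ?_⟩⟩
      · rw [sbT_even]; omega
      · rw [sbT_odd]; omega
    · obtain ⟨j, rfl⟩ : ∃ j, k = j + 1 := ⟨k - 1, by omega⟩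
      refine ⟨2*j+1, by omega, by omega, Or.inl ⟨?_, ?_⟩⟩
      · rw [sbT_odd]; omega
      · rw [show 2*j+1+1 = 2*(j+1) by ring, sbT_even]; omega

lemma sbLen_eq (n k : ℕ) (h1 : 1 ≤ k) (h2 : k ≤ 2 ^ n) :
    sbLen n k = 1 / ((sbT n k : ℝ) * sbT n (k+1)) := by
  have t1 : (0:ℝ) < (sbT n k : ℝ) := by exact_mod_cast sbT_pos n k
  have t2 : (0:ℝ) < (sbT n (k+1) : ℝ) := by exact_mod_cast sbT_pos n (k+1)
  have key : (sbS n (k+1):ℝ) * sbT n k - (sbS n k:ℝ) * sbT n (k+1) = 1 := by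
    exact_mod_cast sb_det n k h1 h2
  rw [sbLen]
  rw [div_sub_div _ _ t2.ne' t1.ne', div_eq_div_iff (by positivity) (by positivity)]
  linear_combination (sbT n (k+1) : ℝ) * (sbT n k) * key

lemma sbLen_pos (n k : ℕ) (h1 : 1 ≤ k) (h2 : k ≤ 2 ^ n) : 0 < sbLen n k := by
  rw [sbLen_eq n k h1 h2]
  have t1 : (0:ℝ) < (sbT n k : ℝ) := by exact_mod_cast sbT_pos n k
  have t2 : (0:ℝ) < (sbT n (k+1) : ℝ) := by exact_mod_cast sbT_pos n (k+1)
  positivity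

lemma gold_pow_succ_succ (m : ℕ) :
    goldenRatio ^ (m+2) = goldenRatio ^ (m+1) + goldenRatio ^ m := by
  have h : goldenRatio ^ (m+2) = goldenRatio ^ m * goldenRatio ^ 2 := by ring
  rw [h, goldenRatio_sq]; ring

lemma fib_le_gpow : ∀ m : ℕ, (Nat.fib (m+1) : ℝ) ≤ goldenRatio ^ m
  | 0 => by simp
  | 1 => by
      rw [pow_one]
      norm_num [Nat.fib]
      exact one_lt_goldenRatio.le
  | (m+2) => by
      have h1 := fib_le_gpow m
      have h2 := fib_le_gpow (m+1)
      rw [gold_pow_succ_succ, show m+2+1 = m+1+2 by ring, Nat.fib_add_two]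
      push_cast
      linarith

lemma gpow_le_fib : ∀ m : ℕ, goldenRatio ^ m ≤ (Nat.fib (m+2) : ℝ)
  | 0 => by simp
  | 1 => by
      rw [pow_one]
      norm_num [Nat.fib]
      exact goldenRatio_lt_two.le
  | (m+2) => by
      have h1 := gpow_le_fib m
      have h2 : goldenRatio ^ (m+1) ≤ (Nat.fib (m+3) : ℝ) := gpow_le_fib (m+1)
      have h3 : (Nat.fib (m+2+2) : ℝ) = Nat.fib (m+2) + Nat.fib (m+3) := by
        rw [Nat.fib_add_two]; push_cast; ring
      rw [gold_pow_succ_succ, h3]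
      linarith

-- term identity

lemma sbLen_rpow (θ : ℝ) (n k : ℕ) (h1 : 1 ≤ k) (h2 : k ≤ 2 ^ n) :
    sbLen n k ^ θ = ((sbT n k : ℝ) * sbT n (k+1)) ^ (-θ) := by
  have t1 : (0:ℝ) < (sbT n k : ℝ) := by exact_mod_cast sbT_pos n k
  have t2 : (0:ℝ) < (sbT n (k+1) : ℝ) := by exact_mod_cast sbT_pos n (k+1)
  rw [sbLen_eq n k h1 h2, one_div, ← Real.rpow_neg_one, ← Real.rpow_mul (by positivity),
    neg_one_mul]

lemma sb_sum_pos (θ : ℝ) (n : ℕ) :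
    0 < ∑ k ∈ Finset.Icc 1 (2 ^ n), sbLen n k ^ θ := by
  have hne : (Finset.Icc (1:ℕ) (2^n)).Nonempty :=
    ⟨1, Finset.mem_Icc.mpr ⟨le_refl _, Nat.one_le_two_pow⟩⟩
  refine Finset.sum_pos (fun i hi => ?_) hne
  obtain ⟨hi1, hi2⟩ := Finset.mem_Icc.mp hi
  exact Real.rpow_pos_of_pos (sbLen_pos n i hi1 hi2) θ

lemma sb_sum_lower (θ : ℝ) (n : ℕ) :
    ((Nat.fib (n + 1) : ℝ) * Nat.fib (n + 2)) ^ (-θ) ≤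
      ∑ k ∈ Finset.Icc 1 (2 ^ n), sbLen n k ^ θ := by
  obtain ⟨k₀, hk1, hk2, hk⟩ := sbT_extreme n
  have hmem : k₀ ∈ Finset.Icc 1 (2^n) := Finset.mem_Icc.mpr ⟨hk1, hk2⟩
  have hterm : sbLen n k₀ ^ θ = ((Nat.fib (n+1) : ℝ) * Nat.fib (n+2)) ^ (-θ) := by
    rw [sbLen_rpow θ n k₀ hk1 hk2]
    congr 1
    exact_mod_cast congrArg (fun x : ℕ => (x : ℝ)) hk
  have hnn : ∀ i ∈ Finset.Icc (1:ℕ) (2^n), 0 ≤ sbLen n i ^ θ := by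
    intro i hi
    obtain ⟨hi1, hi2⟩ := Finset.mem_Icc.mp hi
    exact (Real.rpow_pos_of_pos (sbLen_pos n i hi1 hi2) θ).le
  calc ((Nat.fib (n + 1) : ℝ) * Nat.fib (n + 2)) ^ (-θ) = sbLen n k₀ ^ θ := hterm.symm
    _ ≤ _ := Finset.single_le_sum hnn hmem

lemma sb_sum_upper (θ : ℝ) (hθ : θ ≤ 0) (n : ℕ) :
    (∑ k ∈ Finset.Icc 1 (2 ^ n), sbLen n k ^ θ) ≤
      2 ^ n * ((Nat.fib (n + 1) : ℝ) * Nat.fib (n + 2)) ^ (-θ) := by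
  have h : ∀ i ∈ Finset.Icc 1 (2^n), sbLen n i ^ θ ≤
      ((Nat.fib (n + 1) : ℝ) * Nat.fib (n + 2)) ^ (-θ) := by
    intro i hi
    obtain ⟨hi1, hi2⟩ := Finset.mem_Icc.mp hi
    rw [sbLen_rpow θ n i hi1 hi2]
    apply Real.rpow_le_rpow (by positivity) ?_ (neg_nonneg.mpr hθ)
    exact_mod_cast sbT_mul_le n i hi1 hi2
  calc (∑ k ∈ Finset.Icc 1 (2 ^ n), sbLen n k ^ θ)
      ≤ ∑ _k ∈ Finset.Icc 1 (2 ^ n), ((Nat.fib (n + 1) : ℝ) * Nat.fib (n + 2)) ^ (-θ) :=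
        Finset.sum_le_sum h
    _ = 2 ^ n * ((Nat.fib (n + 1) : ℝ) * Nat.fib (n + 2)) ^ (-θ) := by
        rw [Finset.sum_const, Nat.card_Icc, nsmul_eq_mul]
        push_cast
        ring

lemma sb_third (θ : ℝ) (hθ : θ ≤ 0) (n : ℕ) :
    2 ^ n * ((Nat.fib (n + 1) : ℝ) * Nat.fib (n + 2)) ^ (-θ) ≤
      2 ^ n * goldenRatio ^ (-2 * θ * ((n : ℝ) + 2)) := by
  have hF : ((Nat.fib (n + 1) : ℝ) * Nat.fib (n + 2)) ≤ goldenRatio ^ (2*n+4) := by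
    calc ((Nat.fib (n + 1) : ℝ) * Nat.fib (n + 2))
        ≤ goldenRatio^n * goldenRatio^(n+1) :=
          mul_le_mul (fib_le_gpow n) (fib_le_gpow (n+1)) (by positivity) (by positivity)
      _ = goldenRatio ^ (2*n+1) := by ring
      _ ≤ goldenRatio ^ (2*n+4) := pow_le_pow_right₀ one_lt_goldenRatio.le (by omega)
  have h2 : ((Nat.fib (n + 1) : ℝ) * Nat.fib (n + 2)) ^ (-θ) ≤ (goldenRatio ^ (2*n+4)) ^ (-θ) :=
    Real.rpow_le_rpow (by positivity) hF (neg_nonneg.mpr hθ)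
  have h3 : ((goldenRatio ^ (2*n+4) : ℝ)) ^ (-θ) = goldenRatio ^ (-2 * θ * ((n : ℝ) + 2)) := by
    rw [← Real.rpow_natCast goldenRatio (2*n+4), ← Real.rpow_mul goldenRatio_pos.le]
    congr 1
    push_cast
    ring
  rw [h3] at h2
  exact mul_le_mul_of_nonneg_left h2 (by positivity)

lemma sb_pressure_bounds (θ : ℝ) (hθ : θ ≤ 0) :
    -2 * θ * Real.log goldenRatio ≤ sbPressure θ ∧
    sbPressure θ ≤ Real.log 2 - 2 * θ * Real.log goldenRatio := by
  set L := Real.log goldenRatio with hLdef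
  set u : ℕ → ℝ := fun n => Real.log (∑ k ∈ Finset.Icc 1 (2 ^ n), sbLen n k ^ θ) / n with hu
  have hP : sbPressure θ = limsup u atTop := rfl
  set a : ℕ → ℝ := fun n => -θ * L * (2 - 1/(n:ℝ)) with hadef
  set b : ℕ → ℝ := fun n => Real.log 2 + (-2*θ) * L * (1 + 2 * (1/(n:ℝ))) with hbdef
  have h0 := tendsto_one_div_atTop_nhds_zero_nat (𝕜 := ℝ)
  have ha : Tendsto a atTop (𝓝 (-2*θ*L)) := by
    have h1 : Tendsto a atTop (𝓝 (-θ * L * (2 - 0))) :=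
      tendsto_const_nhds.mul (tendsto_const_nhds.sub h0)
    have he : (-θ * L * (2 - 0) : ℝ) = -2*θ*L := by ring
    rwa [he] at h1
  have hb : Tendsto b atTop (𝓝 (Real.log 2 - 2*θ*L)) := by
    have h1 : Tendsto b atTop (𝓝 (Real.log 2 + (-2*θ) * L * (1 + 2 * 0))) :=
      tendsto_const_nhds.add (tendsto_const_nhds.mul
        (tendsto_const_nhds.add (tendsto_const_nhds.mul h0)))
    have he : (Real.log 2 + (-2*θ) * L * (1 + 2 * 0) : ℝ) = Real.log 2 - 2*θ*L := by ring
    rwa [he] at h1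
  have hau : ∀ n : ℕ, 1 ≤ n → a n ≤ u n := by
    intro n hn
    obtain ⟨m, rfl⟩ : ∃ m, n = m + 1 := ⟨n - 1, by omega⟩
    have hnpos : (0:ℝ) < ((m:ℝ) + 1) := by positivity
    have hSpos := sb_sum_pos θ (m+1)
    have hgF : goldenRatio ^ (2*m+1) ≤ (Nat.fib (m+1+1):ℝ) * Nat.fib (m+1+2) := by
      have he : goldenRatio ^ (2*m+1) = goldenRatio^m * goldenRatio^(m+1) := by ring
      rw [he]
      have e1 : Nat.fib (m+1+1) = Nat.fib (m+2) := rfl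
      have e2 : Nat.fib (m+1+2) = Nat.fib (m+3) := rfl
      rw [e1, e2]
      exact mul_le_mul (gpow_le_fib m) (gpow_le_fib (m+1)) (by positivity) (by positivity)
    have h1 : (goldenRatio ^ (2*m+1) : ℝ) ^ (-θ) ≤
        ∑ k ∈ Finset.Icc 1 (2 ^ (m+1)), sbLen (m+1) k ^ θ :=
      le_trans (Real.rpow_le_rpow (by positivity) hgF (neg_nonneg.2 hθ)) (sb_sum_lower θ (m+1))
    have h2 := Real.log_le_log (by positivity) h1
    rw [Real.log_rpow (by positivity), Real.log_pow] at h2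
    have hgoal : a (m+1) * (((m+1:ℕ)):ℝ) ≤
        Real.log (∑ k ∈ Finset.Icc 1 (2 ^ (m+1)), sbLen (m+1) k ^ θ) := by
      have he : a (m+1) * (((m+1:ℕ)):ℝ) = -θ * L * (2*(m:ℝ)+1) := by
        show (-θ * L * (2 - 1/(((m+1:ℕ)):ℝ))) * (((m+1:ℕ)):ℝ) = _
        have hc : (((m+1:ℕ)):ℝ) = (m:ℝ)+1 := by push_cast; ring
        rw [hc]
        have key : (2 - 1/((m:ℝ)+1)) * ((m:ℝ)+1) = 2*(m:ℝ)+1 := by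
          field_simp
          ring
        linear_combination (-θ*L) * key
      rw [he, hLdef]
      push_cast at h2
      nlinarith [h2]
    show a (m+1) ≤ Real.log (∑ k ∈ Finset.Icc 1 (2 ^ (m+1)), sbLen (m+1) k ^ θ) / (((m+1:ℕ)):ℝ)
    rw [le_div_iff₀ (by positivity)]
    exact hgoal
  have hub : ∀ n : ℕ, 1 ≤ n → u n ≤ b n := by
    intro n hn
    have hnpos : (0:ℝ) < (n:ℝ) := by exact_mod_cast hn
    have hSpos := sb_sum_pos θ n
    have h1 : (∑ k ∈ Finset.Icc 1 (2 ^ n), sbLen n k ^ θ) ≤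
        2 ^ n * goldenRatio ^ (-2 * θ * ((n : ℝ) + 2)) :=
      le_trans (sb_sum_upper θ hθ n) (sb_third θ hθ n)
    have h2 := Real.log_le_log hSpos h1
    rw [Real.log_mul (by positivity) (by positivity),
      Real.log_rpow goldenRatio_pos, Real.log_pow] at h2
    have hgoal : Real.log (∑ k ∈ Finset.Icc 1 (2 ^ n), sbLen n k ^ θ) ≤
        b n * (n:ℝ) := by
      have he : b n * (n:ℝ) = (n:ℝ) * Real.log 2 + (-2*θ) * L * ((n:ℝ)+2) := by
        show (Real.log 2 + (-2*θ) * L * (1 + 2 * (1/(n:ℝ)))) * (n:ℝ) = _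
        have key : (1 + 2*(1/(n:ℝ))) * (n:ℝ) = (n:ℝ)+2 := by
          field_simp
        linear_combination (-2*θ*L) * key
      rw [he, hLdef]
      push_cast at h2
      nlinarith [h2]
    show Real.log (∑ k ∈ Finset.Icc 1 (2 ^ n), sbLen n k ^ θ) / (n:ℝ) ≤ b n
    rw [div_le_iff₀ hnpos]
    exact hgoal
  have h1ev : ∀ᶠ n in atTop, a n ≤ u n := eventually_atTop.mpr ⟨1, hau⟩
  have hubev : ∀ᶠ n in atTop, u n ≤ b n := eventually_atTop.mpr ⟨1, hub⟩
  have haev : ∀ᶠ n in atTop, (-2*θ*L - 1) < a n :=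
    ha.eventually (eventually_gt_nhds (show -2*θ*L - 1 < -2*θ*L by linarith))
  have hbev : ∀ᶠ n in atTop, b n < Real.log 2 - 2*θ*L + 1 :=
    hb.eventually (eventually_lt_nhds (show Real.log 2 - 2*θ*L < Real.log 2 - 2*θ*L + 1 by linarith))
  have hcob_u : IsCoboundedUnder (· ≤ ·) atTop u :=
    isCoboundedUnder_le_of_eventually_le atTop
      ((haev.and h1ev).mono fun n h => le_trans h.1.le h.2)
  have hbdd_u : IsBoundedUnder (· ≤ ·) atTop u :=
    ⟨Real.log 2 - 2*θ*L + 1, eventually_map.2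
      ((hbev.and hubev).mono fun n h => le_trans h.2 h.1.le)⟩
  have hcob_a : IsCoboundedUnder (· ≤ ·) atTop a :=
    isCoboundedUnder_le_of_eventually_le atTop (haev.mono fun n h => h.le)
  constructor
  · have h := limsup_le_limsup h1ev hcob_a hbdd_u
    rw [ha.limsup_eq] at h
    rw [hP]
    exact h
  · have h := limsup_le_limsup hubev hcob_u hb.isBoundedUnder_le
    rw [hb.limsup_eq] at h
    rw [hP]
    exact h

/-- For `θ ≤ 0` and `n ≥ 1`:
`(f_{n+1} f_{n+2})^{-θ} ≤ ∑_k |T_{n,k}|^θ ≤ 2^n (f_{n+1} f_{n+2})^{-θ}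
  ≤ 2^n γ^{-2θ(n+2)}`, and consequently
`-2θ log γ ≤ P(θ) ≤ log 2 - 2θ log γ`. -/
theorem sternBrocot_pressure_bounds (θ : ℝ) (hθ : θ ≤ 0) :
    (∀ n : ℕ, 1 ≤ n →
      ((Nat.fib (n + 1) : ℝ) * Nat.fib (n + 2)) ^ (-θ) ≤
        (∑ k ∈ Finset.Icc 1 (2 ^ n), sbLen n k ^ θ) ∧
      (∑ k ∈ Finset.Icc 1 (2 ^ n), sbLen n k ^ θ) ≤
        2 ^ n * ((Nat.fib (n + 1) : ℝ) * Nat.fib (n + 2)) ^ (-θ) ∧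
      2 ^ n * ((Nat.fib (n + 1) : ℝ) * Nat.fib (n + 2)) ^ (-θ) ≤
        2 ^ n * ((1 + Real.sqrt 5) / 2) ^ (-2 * θ * ((n : ℝ) + 2))) ∧
    -2 * θ * Real.log ((1 + Real.sqrt 5) / 2) ≤ sbPressure θ ∧
    sbPressure θ ≤ Real.log 2 - 2 * θ * Real.log ((1 + Real.sqrt 5) / 2) := by
  exact ⟨fun n _hn => ⟨sb_sum_lower θ n, sb_sum_upper θ hθ n, sb_third θ hθ n⟩,
    sb_pressure_bounds θ hθ⟩
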